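/- arXiv:1810.01826 — 2 statements merged into one kernel-verified Lean document; each statement's English description precedes it below -/
import Mathlib

section
/- A subgroup of a pattern group given by a subposet is normal if and only if the proper intervals of the subposet form a co-ideal (up-closed set) of the poset of proper intervals: precisely, if O is a subposet of a finite poset R, then UT_O is normal in UT_R if and only if Int°(O) is up-closed in Int°(R), where intervals are ordered by inclusion. -/
open Matrix

/-- The pattern group `UT_r` as a set of invertible matrices: unipotent matrices
supported on the intervals of the relation `r`. -/
def UTset {A F : Type*} [Fintype A] [DecidableEq A] [Field F]
    (r : A → A → Prop) : Set (Matrix A A F)ˣ :=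
  {u | (∀ i, (u : Matrix A A F) i i = 1) ∧
       ∀ i j, ¬ r i j → (u : Matrix A A F) i j = 0}

section Aux

variable {A F : Type*} [Fintype A] [DecidableEq A] [Field F]
variable {r : A → A → Prop}

lemma PG.pow_entry_chain (hr : IsPartialOrder A r) {M : Matrix A A F}
    (hM : ∀ i j, M i j ≠ 0 → r i j ∧ i ≠ j) :
    ∀ m i j, (M ^ m) i j ≠ 0 →
      r i j ∧ ∃ s : Finset A, s.card = m ∧ ∀ x ∈ s, r i x ∧ x ≠ i ∧ r x j := by
  intro m
  induction m with
  | zero =>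
    intro i j h
    rw [pow_zero] at h
    have hij : i = j := by
      by_contra hne
      exact h (Matrix.one_apply_ne hne)
    subst hij
    exact ⟨hr.refl i, ∅, rfl, by simp⟩
  | succ m ih =>
    intro i j h
    rw [pow_succ', Matrix.mul_apply] at h
    obtain ⟨k, -, hk⟩ := Finset.exists_ne_zero_of_sum_ne_zero h
    have h1 : M i k ≠ 0 := left_ne_zero_of_mul hk
    have h2 : (M ^ m) k j ≠ 0 := right_ne_zero_of_mul hk
    obtain ⟨hik, hikne⟩ := hM i k h1
    obtain ⟨hkj, s, hs, hsp⟩ := ih k j h2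
    refine ⟨hr.trans _ _ _ hik hkj, insert k s, ?_, ?_⟩
    · rw [Finset.card_insert_of_notMem (fun hks => (hsp k hks).2.1 rfl), hs]
    · intro x hx
      rcases Finset.mem_insert.mp hx with hxk | hxs
      · subst hxk; exact ⟨hik, Ne.symm hikne, hkj⟩
      · obtain ⟨hkx, hxk, hxj⟩ := hsp x hxs
        refine ⟨hr.trans _ _ _ hik hkx, fun hxi => ?_, hxj⟩
        subst hxi
        exact hikne (hr.antisymm _ _ hik hkx)

lemma PG.pow_card_eq_zero (hr : IsPartialOrder A r) {M : Matrix A A F}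
    (hM : ∀ i j, M i j ≠ 0 → r i j ∧ i ≠ j) :
    M ^ Fintype.card A = 0 := by
  ext i j
  rw [Matrix.zero_apply]
  by_contra h
  obtain ⟨-, s, hs, hsp⟩ := PG.pow_entry_chain hr hM _ i j h
  have hsu : s = Finset.univ := Finset.eq_univ_of_card s hs
  exact (hsp i (hsu ▸ Finset.mem_univ i)).2.1 rfl

lemma PG.inv_entry (hr : IsPartialOrder A r) {g : (Matrix A A F)ˣ}
    (hg : g ∈ UTset r) {i j : A} (h : (↑g⁻¹ : Matrix A A F) i j ≠ 0) : r i j := by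
  set G : Matrix A A F := ↑g with hG
  set N : Matrix A A F := -(G - 1) with hN
  have hNs : ∀ a b, N a b ≠ 0 → r a b ∧ a ≠ b := by
    intro a b hab
    by_cases hab' : a = b
    · subst hab'
      exact absurd (by simp [hN, Matrix.neg_apply, Matrix.sub_apply, show G a a = 1 from hg.1 a]) hab
    · refine ⟨?_, hab'⟩
      by_contra hrab
      exact hab (by
        simp [hN, Matrix.neg_apply, Matrix.sub_apply, show G a b = 0 from hg.2 a b hrab,
          Matrix.one_apply_ne hab'])
  set n := Fintype.card A with hn
  have hpow : N ^ n = 0 := PG.pow_card_eq_zero hr hNs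
  set S : Matrix A A F := ∑ m ∈ Finset.range n, N ^ m with hS
  have hgs : S * (N - 1) = N ^ n - 1 := geom_sum_mul N n
  have hNG : N - 1 = -G := by show -(G - 1) - 1 = -G; abel
  rw [hpow, hNG, zero_sub] at hgs
  have h1 : S * G = 1 := by
    have := congrArg Neg.neg hgs
    simpa [mul_neg] using this
  have hinv : (↑g⁻¹ : Matrix A A F) = S := by
    calc (↑g⁻¹ : Matrix A A F) = (S * G) * ↑g⁻¹ := by rw [h1, one_mul]
    _ = S * (G * ↑g⁻¹) := mul_assoc _ _ _
    _ = S := by rw [hG, Units.mul_inv, mul_one]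
  rw [hinv, hS, Matrix.sum_apply] at h
  obtain ⟨m, -, hm⟩ := Finset.exists_ne_zero_of_sum_ne_zero h
  exact (PG.pow_entry_chain hr hNs m i j hm).1

end Aux

section Aux2

variable {A F : Type*} [Fintype A] [DecidableEq A] [Field F]

/-- The elementary unipotent unit `1 + e_{pq}`. -/
def PG.elemU (p q : A) (hpq : p ≠ q) : (Matrix A A F)ˣ where
  val := 1 + Matrix.single p q (1 : F)
  inv := 1 - Matrix.single p q (1 : F)
  val_inv := by
    have h0 : Matrix.single p q (1 : F) * Matrix.single p q (1 : F) = 0 :=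
      Matrix.single_mul_single_of_ne 1 p q _ (Ne.symm hpq) 1
    have h1 : (1 + Matrix.single p q (1 : F)) * (1 - Matrix.single p q (1 : F))
        = 1 - Matrix.single p q (1 : F) * Matrix.single p q (1 : F) := by noncomm_ring
    rw [h1, h0, sub_zero]
  inv_val := by
    have h0 : Matrix.single p q (1 : F) * Matrix.single p q (1 : F) = 0 :=
      Matrix.single_mul_single_of_ne 1 p q _ (Ne.symm hpq) 1
    have h1 : (1 - Matrix.single p q (1 : F)) * (1 + Matrix.single p q (1 : F))
        = 1 - Matrix.single p q (1 : F) * Matrix.single p q (1 : F) := by noncomm_ring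
    rw [h1, h0, sub_zero]

lemma PG.elemU_val {p q : A} (hpq : p ≠ q) :
    (↑(PG.elemU (F := F) p q hpq) : Matrix A A F) = 1 + Matrix.single p q (1 : F) := rfl

lemma PG.elemU_inv_val {p q : A} (hpq : p ≠ q) :
    (↑(PG.elemU (F := F) p q hpq)⁻¹ : Matrix A A F) = 1 - Matrix.single p q (1 : F) := rfl

lemma PG.elemU_mem {r : A → A → Prop} (hrefl : ∀ a, r a a) {p q : A}
    (hpq : p ≠ q) (hrpq : r p q) : PG.elemU (F := F) p q hpq ∈ UTset (F := F) r := by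
  constructor
  · intro a
    rw [PG.elemU_val, Matrix.add_apply, Matrix.one_apply_eq,
      Matrix.single_apply_of_ne p q 1 a a (by rintro ⟨h1, h2⟩; exact hpq (h1.trans h2.symm)),
      add_zero]
  · intro a b hab
    have hne : a ≠ b := fun h => hab (h ▸ hrefl a)
    rw [PG.elemU_val, Matrix.add_apply, Matrix.one_apply_ne hne,
      Matrix.single_apply_of_ne p q 1 a b (by rintro ⟨h1, h2⟩; exact hab (h1 ▸ h2 ▸ hrpq)),
      add_zero]

end Aux2

/-- `UT_O ⊴ UT_R` iff the proper intervals of `O` form a co-ideal (up-closed set)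
of the proper intervals of `R`, ordered by inclusion. -/
theorem pattern_subgroup_normal_iff_coideal
    {A F : Type*} [Fintype A] [DecidableEq A] [Field F] [Fintype F]
    (r o : A → A → Prop) (hr : IsPartialOrder A r) (ho : IsPartialOrder A o)
    (hsub : ∀ i j, o i j → r i j) :
    (∀ g ∈ UTset (F := F) r, ∀ u ∈ UTset (F := F) o,
        g * u * g⁻¹ ∈ UTset (F := F) o) ↔
    (∀ i j k l, (o j k ∧ j ≠ k) → r i j → r k l → (r i l ∧ i ≠ l) →
        (o i l ∧ i ≠ l)) := by
  constructor
  · intro hnorm i j k l hjk hrij hrkl hril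
    obtain ⟨hojk, hjkne⟩ := hjk
    obtain ⟨hril', hilne⟩ := hril
    refine ⟨?_, hilne⟩
    have hik : i ≠ k := fun h => hjkne (hr.antisymm _ _ (hsub _ _ hojk) (h ▸ hrij))
    have hjl : j ≠ l := by
      intro h
      subst h
      exact hjkne (hr.antisymm _ _ (hsub _ _ hojk) hrkl)
    have inner : ∀ (hij : i ≠ j),
        (↑(PG.elemU (F := F) i j hij * PG.elemU (F := F) j k hjkne
            * (PG.elemU (F := F) i j hij)⁻¹) : Matrix A A F)
          = 1 + Matrix.single j k 1 + Matrix.single i k 1 := by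
      intro hij
      rw [Units.val_mul, Units.val_mul, PG.elemU_val, PG.elemU_val, PG.elemU_inv_val]
      have pab : Matrix.single i j (1 : F) * Matrix.single j k 1 = Matrix.single i k 1 := by
        rw [Matrix.single_mul_single_same, one_mul]
      have pba : Matrix.single j k (1 : F) * Matrix.single i j 1 = 0 :=
        Matrix.single_mul_single_of_ne 1 j k _ (Ne.symm hik) 1
      have paa : Matrix.single i j (1 : F) * Matrix.single i j 1 = 0 :=
        Matrix.single_mul_single_of_ne 1 i j _ (Ne.symm hij) 1
      have pca : Matrix.single i k (1 : F) * Matrix.single i j 1 = 0 :=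
        Matrix.single_mul_single_of_ne 1 i k _ (Ne.symm hik) 1
      simp only [mul_add, add_mul, mul_sub, sub_mul, mul_one, one_mul, pab, pba, paa, pca,
        add_zero, zero_add, sub_zero, zero_mul, mul_zero]
      abel
    by_cases hij : i = j
    · by_cases hkl : k = l
      · subst hij; subst hkl; exact hojk
      · subst hij
        have humem : PG.elemU (F := F) i k hjkne ∈ UTset (F := F) o :=
          PG.elemU_mem ho.refl hjkne hojk
        have hg2mem : PG.elemU (F := F) k l hkl ∈ UTset (F := F) r :=
          PG.elemU_mem hr.refl hkl hrkl
        have hw := hnorm _ hg2mem _ humem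
        have hval : (↑(PG.elemU (F := F) k l hkl * PG.elemU (F := F) i k hjkne
              * (PG.elemU (F := F) k l hkl)⁻¹) : Matrix A A F)
            = 1 + Matrix.single i k 1 - Matrix.single i l 1 := by
          rw [Units.val_mul, Units.val_mul, PG.elemU_val, PG.elemU_val, PG.elemU_inv_val]
          have p1 : Matrix.single k l (1 : F) * Matrix.single i k 1 = 0 :=
            Matrix.single_mul_single_of_ne 1 k l _ (Ne.symm hilne) 1
          have p2 : Matrix.single i k (1 : F) * Matrix.single k l 1 = Matrix.single i l 1 := by
            rw [Matrix.single_mul_single_same, one_mul]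
          have p3 : Matrix.single k l (1 : F) * Matrix.single k l 1 = 0 :=
            Matrix.single_mul_single_of_ne 1 k l _ (Ne.symm hkl) 1
          simp only [mul_add, add_mul, mul_sub, sub_mul, mul_one, one_mul, p1, p2, p3,
            add_zero, zero_add, sub_zero, zero_mul, mul_zero]
          abel
        by_contra hoil
        have h0 := hw.2 i l hoil
        rw [hval, Matrix.sub_apply, Matrix.add_apply, Matrix.one_apply_ne hilne,
          Matrix.single_apply_of_ne i k 1 i l (by rintro ⟨-, h2⟩; exact hkl h2),
          Matrix.single_apply_same, zero_add, zero_sub] at h0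
        exact one_ne_zero (neg_eq_zero.mp h0)
    · by_cases hkl : k = l
      · subst hkl
        have humem : PG.elemU (F := F) j k hjkne ∈ UTset (F := F) o :=
          PG.elemU_mem ho.refl hjkne hojk
        have hg1mem : PG.elemU (F := F) i j hij ∈ UTset (F := F) r :=
          PG.elemU_mem hr.refl hij hrij
        have hw := hnorm _ hg1mem _ humem
        by_contra hoil
        have h0 := hw.2 i k hoil
        rw [inner hij, Matrix.add_apply, Matrix.add_apply, Matrix.one_apply_ne hik,
          Matrix.single_apply_of_ne j k 1 i k (by rintro ⟨h1, -⟩; exact hij h1.symm),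
          Matrix.single_apply_same, zero_add, zero_add] at h0
        exact one_ne_zero h0
      · have humem : PG.elemU (F := F) j k hjkne ∈ UTset (F := F) o :=
          PG.elemU_mem ho.refl hjkne hojk
        have hg1mem : PG.elemU (F := F) i j hij ∈ UTset (F := F) r :=
          PG.elemU_mem hr.refl hij hrij
        have hg2mem : PG.elemU (F := F) k l hkl ∈ UTset (F := F) r :=
          PG.elemU_mem hr.refl hkl hrkl
        have hw1 := hnorm _ hg1mem _ humem
        have hw2 := hnorm _ hg2mem _ hw1
        have hval : (↑(PG.elemU (F := F) k l hkl
              * (PG.elemU (F := F) i j hij * PG.elemU (F := F) j k hjkne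
                  * (PG.elemU (F := F) i j hij)⁻¹)
              * (PG.elemU (F := F) k l hkl)⁻¹) : Matrix A A F)
            = 1 + Matrix.single j k 1 + Matrix.single i k 1
              - Matrix.single j l 1 - Matrix.single i l 1 := by
          rw [Units.val_mul, Units.val_mul, inner hij, PG.elemU_val, PG.elemU_inv_val]
          have q1 : Matrix.single k l (1 : F) * Matrix.single j k 1 = 0 :=
            Matrix.single_mul_single_of_ne 1 k l _ (Ne.symm hjl) 1
          have q2 : Matrix.single k l (1 : F) * Matrix.single i k 1 = 0 :=
            Matrix.single_mul_single_of_ne 1 k l _ (Ne.symm hilne) 1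
          have q3 : Matrix.single k l (1 : F) * Matrix.single k l 1 = 0 :=
            Matrix.single_mul_single_of_ne 1 k l _ (Ne.symm hkl) 1
          have q4 : Matrix.single j k (1 : F) * Matrix.single k l 1 = Matrix.single j l 1 := by
            rw [Matrix.single_mul_single_same, one_mul]
          have q5 : Matrix.single i k (1 : F) * Matrix.single k l 1 = Matrix.single i l 1 := by
            rw [Matrix.single_mul_single_same, one_mul]
          simp only [mul_add, add_mul, mul_sub, sub_mul, mul_one, one_mul, q1, q2, q3, q4, q5,
            add_zero, zero_add, sub_zero, zero_mul, mul_zero]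
          abel
        by_contra hoil
        have h0 := hw2.2 i l hoil
        rw [hval, Matrix.sub_apply, Matrix.sub_apply, Matrix.add_apply, Matrix.add_apply,
          Matrix.one_apply_ne hilne,
          Matrix.single_apply_of_ne j k 1 i l (by rintro ⟨h1, -⟩; exact hij h1.symm),
          Matrix.single_apply_of_ne i k 1 i l (by rintro ⟨-, h2⟩; exact hkl h2),
          Matrix.single_apply_of_ne j l 1 i l (by rintro ⟨h1, -⟩; exact hij h1.symm),
          Matrix.single_apply_same] at h0
        simp at h0
  · intro hco g hg u hu
    have hval : (↑(g * u * g⁻¹) : Matrix A A F)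
        = 1 + (↑g : Matrix A A F) * ((↑u : Matrix A A F) - 1) * (↑g⁻¹ : Matrix A A F) := by
      rw [Units.val_mul, Units.val_mul]
      have h1 : (↑u : Matrix A A F) = 1 + ((↑u : Matrix A A F) - 1) := by abel
      calc (↑g : Matrix A A F) * ↑u * ↑g⁻¹
          = (↑g : Matrix A A F) * (1 + ((↑u : Matrix A A F) - 1)) * ↑g⁻¹ := by rw [← h1]
        _ = (↑g : Matrix A A F) * ↑g⁻¹
            + (↑g : Matrix A A F) * ((↑u : Matrix A A F) - 1) * ↑g⁻¹ := by noncomm_ring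
        _ = 1 + (↑g : Matrix A A F) * ((↑u : Matrix A A F) - 1) * ↑g⁻¹ := by
            rw [Units.mul_inv]
    have key : ∀ a b,
        ((↑g : Matrix A A F) * ((↑u : Matrix A A F) - 1) * (↑g⁻¹ : Matrix A A F)) a b ≠ 0 →
        ∃ c d, r a c ∧ o c d ∧ c ≠ d ∧ r d b := by
      intro a b hab
      rw [Matrix.mul_apply] at hab
      obtain ⟨d, -, hd⟩ := Finset.exists_ne_zero_of_sum_ne_zero hab
      have h1 := left_ne_zero_of_mul hd
      have h2 := right_ne_zero_of_mul hd
      rw [Matrix.mul_apply] at h1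
      obtain ⟨c, -, hc⟩ := Finset.exists_ne_zero_of_sum_ne_zero h1
      have h3 := left_ne_zero_of_mul hc
      have h4 := right_ne_zero_of_mul hc
      have hrac : r a c := by by_contra hcon; exact h3 (hg.2 a c hcon)
      have hcd : c ≠ d := by
        rintro rfl
        exact h4 (by rw [Matrix.sub_apply, hu.1 c, Matrix.one_apply_eq, sub_self])
      have hocd : o c d := by
        by_contra hcon
        exact h4 (by rw [Matrix.sub_apply, hu.2 c d hcon, Matrix.one_apply_ne hcd, sub_zero])
      exact ⟨c, d, hrac, hocd, hcd, PG.inv_entry hr hg h2⟩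
    constructor
    · intro a
      rw [hval, Matrix.add_apply, Matrix.one_apply_eq]
      have hz : ((↑g : Matrix A A F) * ((↑u : Matrix A A F) - 1) * (↑g⁻¹ : Matrix A A F)) a a
          = 0 := by
        by_contra hcon
        obtain ⟨c, d, h1, h2, h3, h4⟩ := key a a hcon
        have hcd' : r c d := hsub _ _ h2
        have hac : a = c := hr.antisymm _ _ h1 (hr.trans _ _ _ hcd' h4)
        exact h3 (hr.antisymm _ _ hcd' (hac ▸ h4))
      rw [hz, add_zero]
    · intro a b hoab
      have hab : a ≠ b := fun h => hoab (h ▸ ho.refl a)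
      rw [hval, Matrix.add_apply, Matrix.one_apply_ne hab]
      have hz : ((↑g : Matrix A A F) * ((↑u : Matrix A A F) - 1) * (↑g⁻¹ : Matrix A A F)) a b
          = 0 := by
        by_contra hcon
        obtain ⟨c, d, h1, h2, h3, h4⟩ := key a b hcon
        have hrab : r a b := hr.trans _ _ _ h1 (hr.trans _ _ _ (hsub _ _ h2) h4)
        exact hoab (hco a c d b ⟨h2, h3⟩ h1 h4 ⟨hrab, hab⟩).1
      rw [hz, add_zero]
end

section
/- When R is a total order on an n-element set, the number of non-nesting R-partitions equals the n-th Catalan number C_n; equivalently, the number of antichains in the poset of proper intervals {[i,j] : 1 ≤ i < j ≤ n} ordered by containment ([i,j] ≤ [k,l] iff k ≤ i and j ≤ l) is C_n. -/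
namespace NonNestingAux

open DyckStep Finset

/-! ### Rank functions on finite sets of naturals -/

/-- The rank of `x` in `K`: the number of elements of `K` below `x`. -/
def rk (K : Finset ℕ) (x : ℕ) : ℕ := (K.filter (· < x)).card

lemma rk_mono (K : Finset ℕ) {x y : ℕ} (h : x ≤ y) : rk K x ≤ rk K y :=
  Finset.card_le_card (Finset.monotone_filter_right K (fun z _ hz => lt_of_lt_of_le hz h))

lemma rk_lt_rk (K : Finset ℕ) {x y : ℕ} (hx : x ∈ K) (hxy : x < y) : rk K x < rk K y := by
  have hsub : insert x (K.filter (· < x)) ⊆ K.filter (· < y) := by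
    intro z hz
    rcases Finset.mem_insert.mp hz with rfl | hz
    · exact Finset.mem_filter.mpr ⟨hx, hxy⟩
    · rcases Finset.mem_filter.mp hz with ⟨hz1, hz2⟩
      exact Finset.mem_filter.mpr ⟨hz1, lt_trans hz2 hxy⟩
  have hnot : x ∉ K.filter (· < x) := by simp
  have := Finset.card_le_card hsub
  rw [Finset.card_insert_of_notMem hnot] at this
  unfold rk
  omega

lemma rk_inj (K : Finset ℕ) {x y : ℕ} (hx : x ∈ K) (hy : y ∈ K) (h : rk K x = rk K y) :
    x = y := by
  rcases lt_trichotomy x y with hlt | heq | hgt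
  · exact absurd h (Nat.ne_of_lt (rk_lt_rk K hx hlt))
  · exact heq
  · exact absurd h.symm (Nat.ne_of_lt (rk_lt_rk K hy hgt))

lemma lt_of_rk_lt (K : Finset ℕ) {x y : ℕ} (h : rk K x < rk K y) : x < y := by
  by_contra hc
  exact absurd (rk_mono K (not_lt.mp hc)) (not_le.mpr h)

lemma rk_lt_card (K : Finset ℕ) {x : ℕ} (hx : x ∈ K) : rk K x < K.card := by
  apply Finset.card_lt_card
  rw [Finset.ssubset_iff_of_subset (Finset.filter_subset _ _)]
  exact ⟨x, hx, by simp⟩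

lemma rk_surj (K : Finset ℕ) {r : ℕ} (hr : r < K.card) : ∃ x ∈ K, rk K x = r := by
  have := Finset.surj_on_of_inj_on_of_card_le (s := K) (t := Finset.range K.card)
    (fun x _ => rk K x) (fun x hx => Finset.mem_range.mpr (rk_lt_card K hx))
    (fun x y hx hy h => rk_inj K hx hy h) (by rw [Finset.card_range])
  obtain ⟨x, hx, hxr⟩ := this r (Finset.mem_range.mpr hr)
  exact ⟨x, hx, hxr.symm⟩

lemma card_filter_lt_succ (K : Finset ℕ) (m : ℕ) :
    (K.filter (· < m + 1)).card = (K.filter (· < m)).card + (if m ∈ K then 1 else 0) := by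
  have h : K.filter (· < m + 1) = K.filter (· < m) ∪ K.filter (· = m) := by
    rw [← Finset.filter_or]
    apply Finset.filter_congr
    intro x _
    constructor
    · intro h; omega
    · intro h; omega
  rw [h, Finset.card_union_of_disjoint, Finset.filter_eq']
  · split_ifs <;> simp
  · rw [Finset.disjoint_left]
    intro a ha ha'
    rcases Finset.mem_filter.mp ha with ⟨-, h1⟩
    rcases Finset.mem_filter.mp ha' with ⟨-, h2⟩
    omega

lemma card_filter_lt_le (K : Finset ℕ) (m : ℕ) : (K.filter (· < m)).card ≤ m := by
  have : K.filter (· < m) ⊆ Finset.range m := by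
    intro x hx
    exact Finset.mem_range.mpr (Finset.mem_filter.mp hx).2
  simpa using Finset.card_le_card this

/-! ### Words built from two step functions, two letters per position -/

/-- The word whose `m`-th two-letter block is `[a m, b m]`. -/
def wd (a b : ℕ → DyckStep) : ℕ → List DyckStep
  | 0 => []
  | n + 1 => wd a b n ++ [a n, b n]

lemma wd_length (a b : ℕ → DyckStep) (n : ℕ) : (wd a b n).length = 2 * n := by
  induction n with
  | zero => rfl
  | succ n ih => simp [wd, ih]; omega

lemma wd_congr {a b a' b' : ℕ → DyckStep} {n : ℕ} (ha : ∀ m < n, a m = a' m)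
    (hb : ∀ m < n, b m = b' m) : wd a b n = wd a' b' n := by
  induction n with
  | zero => rfl
  | succ n ih =>
    rw [wd, wd, ih (fun m hm => ha m (by omega)) (fun m hm => hb m (by omega)),
      ha n (by omega), hb n (by omega)]

lemma wd_take_even {a b : ℕ → DyckStep} {m n : ℕ} (h : m ≤ n) :
    (wd a b n).take (2 * m) = wd a b m := by
  induction n with
  | zero =>
    have : m = 0 := by omega
    subst this; rfl
  | succ n ih =>
    rcases Nat.lt_or_ge m (n + 1) with h' | h'
    · rw [wd, List.take_append_of_le_length (by rw [wd_length]; omega), ih (by omega)]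
    · have hm : m = n + 1 := by omega
      subst hm
      exact List.take_of_length_le (by rw [wd_length])

lemma wd_take_odd {a b : ℕ → DyckStep} {m n : ℕ} (h : m < n) :
    (wd a b n).take (2 * m + 1) = wd a b m ++ [a m] := by
  induction n with
  | zero => omega
  | succ n ih =>
    rcases Nat.lt_or_ge m n with h' | h'
    · rw [wd, List.take_append_of_le_length (by rw [wd_length]; omega), ih h']
    · have hm : m = n := by omega
      subst hm
      rw [wd, List.take_append, wd_length,
        List.take_of_length_le (by rw [wd_length]; omega)]
      congr 1
      have h1 : 2 * m + 1 - 2 * m = 1 := by omega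
      rw [h1]
      rfl

lemma getElem!_take {α : Type*} [Inhabited α] (l : List α) {k i : ℕ} (h : i < k)
    (h2 : k ≤ l.length) : (l.take k)[i]! = l[i]! := by
  rw [getElem!_pos _ _ (by simp; omega), getElem!_pos _ _ (by omega), List.getElem_take]

lemma getElem!_concat {α : Type*} [Inhabited α] (l : List α) (x : α) :
    (l ++ [x])[l.length]! = x := by
  rw [getElem!_pos]
  · simp
  · simp

lemma wd_get_fst {a b : ℕ → DyckStep} {m n : ℕ} (h : m < n) : (wd a b n)[2 * m]! = a m := by
  rw [← getElem!_take (wd a b n) (show 2 * m < 2 * m + 1 by omega)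
    (by rw [wd_length]; omega), wd_take_odd h]
  have hl := wd_length a b m
  calc (wd a b m ++ [a m])[2 * m]! = (wd a b m ++ [a m])[(wd a b m).length]! := by rw [hl]
    _ = a m := getElem!_concat _ _

lemma wd_get_snd {a b : ℕ → DyckStep} {m n : ℕ} (h : m < n) : (wd a b n)[2 * m + 1]! = b m := by
  rw [← getElem!_take (wd a b n) (show 2 * m + 1 < 2 * (m + 1) by omega)
    (by rw [wd_length]; omega), wd_take_even (show m + 1 ≤ n by omega)]
  have : wd a b (m + 1) = (wd a b m ++ [a m]) ++ [b m] := by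
    rw [wd, List.append_assoc]; rfl
  rw [this]
  have hl : (wd a b m ++ [a m]).length = 2 * m + 1 := by
    simp [wd_length]
  calc ((wd a b m ++ [a m]) ++ [b m])[2 * m + 1]!
      = ((wd a b m ++ [a m]) ++ [b m])[(wd a b m ++ [a m]).length]! := by rw [hl]
    _ = b m := getElem!_concat _ _

/-- Every list of even length is recovered from its two-letter blocks. -/
lemma chunk' : ∀ (n : ℕ) (l : List DyckStep), l.length = 2 * n →
    wd (fun m => l[2 * m]!) (fun m => l[2 * m + 1]!) n = l := by
  intro n
  induction n with
  | zero =>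
    intro l hl
    rw [List.length_eq_zero_iff.mp hl]; rfl
  | succ n ih =>
    intro l hl
    have hlen : (l.take (2 * n)).length = 2 * n := by
      rw [List.length_take]; omega
    have hd : l.drop (2 * n) = [l[2 * n]!, l[2 * n + 1]!] := by
      have hdl : (l.drop (2 * n)).length = 2 := by rw [List.length_drop]; omega
      have h0 : (l.drop (2 * n))[0]! = l[2 * n]! := by
        rw [getElem!_pos _ _ (by omega), getElem!_pos _ _ (by omega)]
        rw [List.getElem_drop]
        congr 1
      have h1 : (l.drop (2 * n))[1]! = l[2 * n + 1]! := by
        rw [getElem!_pos _ _ (by omega), getElem!_pos _ _ (by omega)]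
        rw [List.getElem_drop]
      match hmatch : l.drop (2 * n), hdl with
      | [x, y], _ =>
        rw [hmatch] at h0 h1
        simp at h0 h1
        rw [h0, h1]
        simp
    have hih := ih (l.take (2 * n)) hlen
    have hcong : wd (fun m => (l.take (2 * n))[2 * m]!) (fun m => (l.take (2 * n))[2 * m + 1]!) n
        = wd (fun m => l[2 * m]!) (fun m => l[2 * m + 1]!) n := by
      apply wd_congr
      · intro m hm
        exact getElem!_take l (by omega) (by omega)
      · intro m hm
        exact getElem!_take l (by omega) (by omega)
    rw [wd, ← hcong, hih, ← hd, List.take_append_drop]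

/-! ### Words from a pair of endpoint sets -/

/-- First letter of block `m`: `D` iff `m` is a right endpoint. -/
def stepJ (J : Finset ℕ) (m : ℕ) : DyckStep := if m ∈ J then D else U

/-- Second letter of block `m`: `U` iff `m` is a left endpoint. -/
def stepI (I : Finset ℕ) (m : ℕ) : DyckStep := if m ∈ I then U else D

/-- The encoding of the pair `(I, J)` as a word of length `2 * n`. -/
def wdIJ (I J : Finset ℕ) (n : ℕ) : List DyckStep := wd (stepJ J) (stepI I) n

lemma count_U_wd (I J : Finset ℕ) (n : ℕ) :
    (wdIJ I J n).count U + (J.filter (· < n)).card = n + (I.filter (· < n)).card := by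
  induction n with
  | zero => simp [wdIJ, wd]
  | succ n ih =>
    show ((wd _ _ n ++ [stepJ J n, stepI I n]).count U) + _ = _
    rw [List.count_append, card_filter_lt_succ, card_filter_lt_succ]
    have h1 : ([stepJ J n, stepI I n].count U)
        = (if n ∈ J then 0 else 1) + (if n ∈ I then 1 else 0) := by
      unfold stepJ stepI
      split_ifs <;> simp [List.count_cons]
    rw [h1]
    have := ih
    unfold wdIJ at this
    split_ifs <;> omega

lemma count_D_wd (I J : Finset ℕ) (n : ℕ) :
    (wdIJ I J n).count D + (I.filter (· < n)).card = n + (J.filter (· < n)).card := by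
  induction n with
  | zero => simp [wdIJ, wd]
  | succ n ih =>
    show ((wd _ _ n ++ [stepJ J n, stepI I n]).count D) + _ = _
    rw [List.count_append, card_filter_lt_succ, card_filter_lt_succ]
    have h1 : ([stepJ J n, stepI I n].count D)
        = (if n ∈ J then 1 else 0) + (if n ∈ I then 0 else 1) := by
      unfold stepJ stepI
      split_ifs <;> simp [List.count_cons]
    rw [h1]
    have := ih
    unfold wdIJ at this
    split_ifs <;> omega

/-! ### The ballot condition -/

/-- The ballot condition: `I` and `J` are subsets of `[0, n)` of equal size such that
below every point there are at least as many left endpoints (strictly below) as right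
endpoints (weakly below). -/
def BallotCond (n : ℕ) (I J : Finset ℕ) : Prop :=
  (∀ x ∈ I, x < n) ∧ (∀ x ∈ J, x < n) ∧ I.card = J.card ∧
    ∀ m < n, (J.filter (· < m + 1)).card ≤ (I.filter (· < m)).card

lemma BallotCond.filterI {n : ℕ} {I J : Finset ℕ} (h : BallotCond n I J) :
    I.filter (· < n) = I :=
  Finset.filter_true_of_mem h.1

lemma BallotCond.filterJ {n : ℕ} {I J : Finset ℕ} (h : BallotCond n I J) :
    J.filter (· < n) = J :=
  Finset.filter_true_of_mem h.2.1

lemma ballot_count_U (n : ℕ) {I J : Finset ℕ} (h : BallotCond n I J) :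
    (wdIJ I J n).count U = n := by
  have h1 := count_U_wd I J n
  rw [h.filterI, h.filterJ] at h1
  have h2 := h.2.2.1
  omega

lemma ballot_count_D (n : ℕ) {I J : Finset ℕ} (h : BallotCond n I J) :
    (wdIJ I J n).count D = n := by
  have h1 := count_D_wd I J n
  rw [h.filterI, h.filterJ] at h1
  have h2 := h.2.2.1
  omega

lemma ballot_prefix (n : ℕ) {I J : Finset ℕ} (h : BallotCond n I J) (i : ℕ) :
    ((wdIJ I J n).take i).count D ≤ ((wdIJ I J n).take i).count U := by
  rcases le_or_gt (2 * n) i with hi | hi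
  · rw [List.take_of_length_le (by rw [wdIJ, wd_length]; omega)]
    rw [ballot_count_U n h, ballot_count_D n h]
  · obtain ⟨m, hmn, hcase⟩ : ∃ m, m < n ∧ (i = 2 * m ∨ i = 2 * m + 1) :=
      ⟨i / 2, by omega, by omega⟩
    have hballot := h.2.2.2 m hmn
    have hJs := card_filter_lt_succ J m
    have hJle := card_filter_lt_le J m
    have hIle := card_filter_lt_le I m
    have hU := count_U_wd I J m
    have hD := count_D_wd I J m
    rcases hcase with rfl | rfl
    · rw [show (wdIJ I J n).take (2 * m) = wdIJ I J m from wd_take_even (by omega)]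
      split_ifs at hJs <;> omega
    · rw [show (wdIJ I J n).take (2 * m + 1) = wdIJ I J m ++ [stepJ J m] from wd_take_odd hmn]
      rw [List.count_append, List.count_append]
      unfold stepJ
      split_ifs at hJs ⊢ <;> simp [List.count_cons] <;> omega

/-- The Dyck word encoding a ballot pair. -/
def dyckOfBallot (n : ℕ) (IJ : {IJ : Finset ℕ × Finset ℕ // BallotCond n IJ.1 IJ.2}) :
    {p : DyckWord // p.semilength = n} :=
  ⟨⟨wdIJ IJ.1.1 IJ.1.2 n,
    by rw [ballot_count_U n IJ.2, ballot_count_D n IJ.2],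
    fun i => ballot_prefix n IJ.2 i⟩,
    by simp only [DyckWord.semilength]; exact ballot_count_U n IJ.2⟩

/-- Recovering the left endpoints from a word. -/
def IofL (l : List DyckStep) (n : ℕ) : Finset ℕ :=
  (Finset.range n).filter (fun m => l[2 * m + 1]! = U)

/-- Recovering the right endpoints from a word. -/
def JofL (l : List DyckStep) (n : ℕ) : Finset ℕ :=
  (Finset.range n).filter (fun m => l[2 * m]! = D)

lemma chunkIJ (n : ℕ) (l : List DyckStep) (hl : l.length = 2 * n) :
    wdIJ (IofL l n) (JofL l n) n = l := by
  conv_rhs => rw [← chunk' n l hl]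
  apply wd_congr
  · intro m hm
    unfold stepJ JofL
    rcases (l[2 * m]!).dichotomy with hU | hD
    · rw [if_neg, hU]
      intro hmem
      have hcon := (Finset.mem_filter.mp hmem).2
      rw [hU] at hcon
      exact DyckStep.noConfusion hcon
    · rw [if_pos (Finset.mem_filter.mpr ⟨Finset.mem_range.mpr hm, hD⟩), hD]
  · intro m hm
    unfold stepI IofL
    rcases (l[2 * m + 1]!).dichotomy with hU | hD
    · rw [if_pos (Finset.mem_filter.mpr ⟨Finset.mem_range.mpr hm, hU⟩), hU]
    · rw [if_neg, hD]
      intro hmem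
      have hcon := (Finset.mem_filter.mp hmem).2
      rw [hD] at hcon
      exact DyckStep.noConfusion hcon

lemma ballot_of_dyck (n : ℕ) (p : DyckWord) (hp : p.semilength = n) :
    BallotCond n (IofL p.toList n) (JofL p.toList n) := by
  set l := p.toList with hldef
  have hl : l.length = 2 * n := by
    rw [← p.two_mul_semilength_eq_length, hp]
  have hw : wdIJ (IofL l n) (JofL l n) n = l := chunkIJ n l hl
  set I := IofL l n
  set J := JofL l n
  have hIb : ∀ x ∈ I, x < n := fun x hx => Finset.mem_range.mp (Finset.mem_filter.mp hx).1
  have hJb : ∀ x ∈ J, x < n := fun x hx => Finset.mem_range.mp (Finset.mem_filter.mp hx).1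
  have hIf : I.filter (· < n) = I := Finset.filter_true_of_mem hIb
  have hJf : J.filter (· < n) = J := Finset.filter_true_of_mem hJb
  have hUD : l.count U = l.count D := p.count_U_eq_count_D
  have hU := count_U_wd I J n
  have hD := count_D_wd I J n
  rw [hw, hIf, hJf] at hU hD
  have hIle : I.card ≤ n := by
    have : I ⊆ Finset.range n := fun x hx => Finset.mem_range.mpr (hIb x hx)
    simpa using Finset.card_le_card this
  have hJle : J.card ≤ n := by
    have : J ⊆ Finset.range n := fun x hx => Finset.mem_range.mpr (hJb x hx)
    simpa using Finset.card_le_card this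
  refine ⟨hIb, hJb, by omega, ?_⟩
  intro m hm
  have hpre := p.count_D_le_count_U (2 * m + 1)
  rw [← hldef] at hpre
  rw [← hw] at hpre
  rw [show (wdIJ I J n).take (2 * m + 1) = wdIJ I J m ++ [stepJ J m] from wd_take_odd hm,
    List.count_append, List.count_append] at hpre
  have hJs := card_filter_lt_succ J m
  have hUm := count_U_wd I J m
  have hDm := count_D_wd I J m
  unfold stepJ at hpre
  split_ifs at hpre hJs <;> simp [List.count_cons] at hpre <;> omega

/-- The equivalence between ballot pairs and Dyck words of semilength `n`. -/
def ballotEquivDyck (n : ℕ) :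
    {IJ : Finset ℕ × Finset ℕ // BallotCond n IJ.1 IJ.2} ≃
      {p : DyckWord // p.semilength = n} where
  toFun := dyckOfBallot n
  invFun p := ⟨(IofL p.1.toList n, JofL p.1.toList n), ballot_of_dyck n p.1 p.2⟩
  left_inv IJ := by
    obtain ⟨⟨I, J⟩, hIJ⟩ := IJ
    apply Subtype.ext
    have hIb := hIJ.1
    have hJb := hIJ.2.1
    have hfst : IofL (wdIJ I J n) n = I := by
      ext x
      simp only [IofL, Finset.mem_filter, Finset.mem_range]
      constructor
      · rintro ⟨hx, hg⟩
        rw [show (wdIJ I J n)[2 * x + 1]! = stepI I x from wd_get_snd hx] at hg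
        unfold stepI at hg
        by_contra hc
        rw [if_neg hc] at hg
        exact absurd hg (by simp)
      · intro hx
        refine ⟨hIb x hx, ?_⟩
        rw [show (wdIJ I J n)[2 * x + 1]! = stepI I x from wd_get_snd (hIb x hx)]
        unfold stepI
        rw [if_pos hx]
    have hsnd : JofL (wdIJ I J n) n = J := by
      ext x
      simp only [JofL, Finset.mem_filter, Finset.mem_range]
      constructor
      · rintro ⟨hx, hg⟩
        rw [show (wdIJ I J n)[2 * x]! = stepJ J x from wd_get_fst hx] at hg
        unfold stepJ at hg
        by_contra hc
        rw [if_neg hc] at hg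
        exact absurd hg (by simp)
      · intro hx
        refine ⟨hJb x hx, ?_⟩
        rw [show (wdIJ I J n)[2 * x]! = stepJ J x from wd_get_fst (hJb x hx)]
        unfold stepJ
        rw [if_pos hx]
    show (IofL (wdIJ I J n) n, JofL (wdIJ I J n) n) = (I, J)
    rw [hfst, hsnd]
  right_inv p := by
    apply Subtype.ext
    apply DyckWord.ext
    show wdIJ _ _ n = p.1.toList
    apply chunkIJ
    rw [← p.1.two_mul_semilength_eq_length, p.2]

/-! ### From antichains to ballot pairs -/

variable {n : ℕ}

/-- The underlying finset of a set of pairs. -/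
noncomputable def finA (A : Set (Fin n × Fin n)) : Finset (Fin n × Fin n) :=
  (Set.toFinite A).toFinset

lemma mem_finA {A : Set (Fin n × Fin n)} {p : Fin n × Fin n} : p ∈ finA A ↔ p ∈ A :=
  Set.Finite.mem_toFinset _

/-- Left endpoints. -/
noncomputable def Iof (A : Set (Fin n × Fin n)) : Finset ℕ :=
  (finA A).image (fun p => (p.1 : ℕ))

/-- Right endpoints. -/
noncomputable def Jof (A : Set (Fin n × Fin n)) : Finset ℕ :=
  (finA A).image (fun p => (p.2 : ℕ))

/-- The non-nesting set of pairs built from a ballot pair by rank matching. -/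
def achOf (n : ℕ) (I J : Finset ℕ) : Set (Fin n × Fin n) :=
  {p | (p.1 : ℕ) ∈ I ∧ (p.2 : ℕ) ∈ J ∧ rk I (p.1 : ℕ) = rk J (p.2 : ℕ)}

section Antichain

variable {A : Set (Fin n × Fin n)}
  (h1 : ∀ p ∈ A, p.1 < p.2)
  (h2 : ∀ p ∈ A, ∀ q ∈ A, p ≠ q → ¬(q.1 ≤ p.1 ∧ p.2 ≤ q.2))

include h2

lemma ach_fst_inj : ∀ p ∈ A, ∀ q ∈ A, p.1 = q.1 → p = q := by
  intro p hp q hq he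
  by_contra hc
  have hpq := h2 p hp q hq hc
  have hqp := h2 q hq p hp (Ne.symm hc)
  rw [not_and] at hpq hqp
  have l1 := hpq (le_of_eq he.symm)
  have l2 := hqp (le_of_eq he)
  omega

lemma ach_snd_inj : ∀ p ∈ A, ∀ q ∈ A, p.2 = q.2 → p = q := by
  intro p hp q hq he
  by_contra hc
  have hpq := h2 p hp q hq hc
  have hqp := h2 q hq p hp (Ne.symm hc)
  rw [not_and'] at hpq hqp
  have l1 := hpq (le_of_eq he)
  have l2 := hqp (le_of_eq he.symm)
  omega

lemma ach_mono : ∀ p ∈ A, ∀ q ∈ A, p.1 < q.1 → p.2 < q.2 := by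
  intro p hp q hq hlt
  have hne : q ≠ p := by
    intro he; rw [he] at hlt; exact lt_irrefl _ hlt
  have := h2 q hq p hp hne
  rw [not_and] at this
  exact lt_of_not_ge (this (le_of_lt hlt))

lemma ach_mono_iff : ∀ p ∈ A, ∀ q ∈ A, (p.1 < q.1 ↔ p.2 < q.2) := by
  intro p hp q hq
  constructor
  · exact ach_mono h2 p hp q hq
  · intro hlt
    rcases lt_trichotomy p.1 q.1 with h | h | h
    · exact h
    · exact absurd (congrArg Prod.snd (ach_fst_inj h2 p hp q hq h)) (ne_of_lt hlt)
    · exact absurd (ach_mono h2 q hq p hp h) (not_lt.mpr (le_of_lt hlt))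

lemma ach_injOn_fst : Set.InjOn (fun p : Fin n × Fin n => (p.1 : ℕ)) (finA A) := by
  intro p hp q hq he
  exact ach_fst_inj h2 p (mem_finA.mp hp) q (mem_finA.mp hq) (Fin.val_injective he)

lemma ach_injOn_snd : Set.InjOn (fun p : Fin n × Fin n => (p.2 : ℕ)) (finA A) := by
  intro p hp q hq he
  exact ach_snd_inj h2 p (mem_finA.mp hp) q (mem_finA.mp hq) (Fin.val_injective he)

/-- The fundamental rank identity: matched endpoints have equal ranks. -/
lemma ach_rk_eq : ∀ p ∈ A, rk (Iof A) (p.1 : ℕ) = rk (Jof A) (p.2 : ℕ) := by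
  intro p hp
  unfold rk Iof Jof
  rw [Finset.filter_image, Finset.filter_image,
    Finset.card_image_of_injOn (Set.InjOn.mono (Finset.filter_subset _ _) (ach_injOn_fst h2)),
    Finset.card_image_of_injOn (Set.InjOn.mono (Finset.filter_subset _ _) (ach_injOn_snd h2))]
  congr 1
  apply Finset.filter_congr
  intro q hq
  have hq' := mem_finA.mp hq
  show (q.1 : ℕ) < (p.1 : ℕ) ↔ (q.2 : ℕ) < (p.2 : ℕ)
  exact ach_mono_iff h2 q hq' p hp

include h1

lemma ach_ballot : BallotCond n (Iof A) (Jof A) := by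
  refine ⟨?_, ?_, ?_, ?_⟩
  · intro x hx
    obtain ⟨p, -, rfl⟩ := Finset.mem_image.mp hx
    exact p.1.isLt
  · intro x hx
    obtain ⟨p, -, rfl⟩ := Finset.mem_image.mp hx
    exact p.2.isLt
  · rw [Iof, Jof, Finset.card_image_of_injOn (ach_injOn_fst h2),
      Finset.card_image_of_injOn (ach_injOn_snd h2)]
  · intro m hm
    have hJ : (Jof A).filter (· < m + 1)
        = ((finA A).filter (fun q => (q.2 : ℕ) < m + 1)).image (fun p => (p.2 : ℕ)) := by
      rw [Jof, Finset.filter_image]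
    have hJc : ((Jof A).filter (· < m + 1)).card
        = ((finA A).filter (fun q => (q.2 : ℕ) < m + 1)).card := by
      rw [hJ, Finset.card_image_of_injOn
        (Set.InjOn.mono (Finset.filter_subset _ _) (ach_injOn_snd h2))]
    have hsub : ((finA A).filter (fun q => (q.2 : ℕ) < m + 1)).image (fun p => (p.1 : ℕ))
        ⊆ (Iof A).filter (· < m) := by
      intro x hx
      obtain ⟨q, hq, rfl⟩ := Finset.mem_image.mp hx
      rcases Finset.mem_filter.mp hq with ⟨hqA, hq2⟩
      refine Finset.mem_filter.mpr ⟨Finset.mem_image_of_mem _ hqA, ?_⟩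
      have := h1 q (mem_finA.mp hqA)
      have : (q.1 : ℕ) < (q.2 : ℕ) := this
      omega
    calc ((Jof A).filter (· < m + 1)).card
        = ((finA A).filter (fun q => (q.2 : ℕ) < m + 1)).card := hJc
      _ = (((finA A).filter (fun q => (q.2 : ℕ) < m + 1)).image (fun p => (p.1 : ℕ))).card := by
          rw [Finset.card_image_of_injOn
            (Set.InjOn.mono (Finset.filter_subset _ _) (ach_injOn_fst h2))]
      _ ≤ ((Iof A).filter (· < m)).card := Finset.card_le_card hsub

/-- Recovering the antichain from its endpoint sets. -/
lemma ach_recover : achOf n (Iof A) (Jof A) = A := by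
  ext p
  constructor
  · rintro ⟨hp1, hp2, hrk⟩
    obtain ⟨q, hq, hq1⟩ := Finset.mem_image.mp hp1
    have hqA := mem_finA.mp hq
    have hq1' : q.1 = p.1 := Fin.val_injective hq1
    have : rk (Jof A) (q.2 : ℕ) = rk (Jof A) (p.2 : ℕ) := by
      rw [← ach_rk_eq h2 q hqA, hq1', hrk]
    have hq2mem : (q.2 : ℕ) ∈ Jof A := Finset.mem_image_of_mem _ hq
    have hq2' : q.2 = p.2 := Fin.val_injective (rk_inj _ hq2mem hp2 this)
    have : q = p := Prod.ext hq1' hq2'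
    rw [← this]; exact hqA
  · intro hp
    have hpF : p ∈ finA A := mem_finA.mpr hp
    exact ⟨Finset.mem_image_of_mem _ hpF, Finset.mem_image_of_mem _ hpF, ach_rk_eq h2 p hp⟩

end Antichain

section Ballot

variable {I J : Finset ℕ} (hb : BallotCond n I J)

include hb

lemma ballot_lt : ∀ p ∈ achOf n I J, p.1 < p.2 := by
  rintro p ⟨hp1, hp2, hrk⟩
  have hball := hb.2.2.2 (p.2 : ℕ) p.2.isLt
  have hins : insert (p.2 : ℕ) (J.filter (· < (p.2 : ℕ))) ⊆ J.filter (· < (p.2 : ℕ) + 1) := by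
    intro z hz
    rcases Finset.mem_insert.mp hz with rfl | hz
    · exact Finset.mem_filter.mpr ⟨hp2, by omega⟩
    · rcases Finset.mem_filter.mp hz with ⟨hz1, hz2⟩
      exact Finset.mem_filter.mpr ⟨hz1, by omega⟩
    
  have hnot : (p.2 : ℕ) ∉ J.filter (· < (p.2 : ℕ)) := by simp
  have hcard := Finset.card_le_card hins
  rw [Finset.card_insert_of_notMem hnot] at hcard
  have hlt : rk J (p.2 : ℕ) < rk I (p.2 : ℕ) := by
    unfold rk; omega
  rw [← hrk] at hlt
  have := lt_of_rk_lt I hlt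
  exact this

lemma ballot_antichain :
    ∀ p ∈ achOf n I J, ∀ q ∈ achOf n I J, p ≠ q → ¬(q.1 ≤ p.1 ∧ p.2 ≤ q.2) := by
  rintro p ⟨hp1, hp2, hpr⟩ q ⟨hq1, hq2, hqr⟩ hne ⟨hle1, hle2⟩
  rcases eq_or_lt_of_le hle1 with heq | hlt
  · have hv1 : (q.1 : ℕ) = (p.1 : ℕ) := by rw [heq]
    have : rk J (p.2 : ℕ) = rk J (q.2 : ℕ) := by rw [← hpr, ← hqr, hv1]
    have hv2 : (p.2 : ℕ) = (q.2 : ℕ) := rk_inj J hp2 hq2 this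
    exact hne (Prod.ext (Fin.val_injective hv1).symm (Fin.val_injective hv2))
  · have hv : (q.1 : ℕ) < (p.1 : ℕ) := hlt
    have hrlt : rk I (q.1 : ℕ) < rk I (p.1 : ℕ) := rk_lt_rk I hq1 hv
    rw [hpr, hqr] at hrlt
    have := lt_of_rk_lt J hrlt
    have hle2' : (p.2 : ℕ) ≤ (q.2 : ℕ) := hle2
    omega

lemma ballot_recover_I : Iof (achOf n I J) = I := by
  ext x
  constructor
  · intro hx
    obtain ⟨p, hp, rfl⟩ := Finset.mem_image.mp hx
    exact (mem_finA.mp hp).1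
  · intro hx
    have hxn : x < n := hb.1 x hx
    have hr : rk I x < J.card := by
      rw [← hb.2.2.1]; exact rk_lt_card I hx
    obtain ⟨j, hj, hjr⟩ := rk_surj J hr
    have hjn : j < n := hb.2.1 j hj
    have hmem : ((⟨x, hxn⟩ : Fin n), (⟨j, hjn⟩ : Fin n)) ∈ achOf n I J := ⟨hx, hj, hjr.symm⟩
    exact Finset.mem_image.mpr ⟨_, mem_finA.mpr hmem, rfl⟩

lemma ballot_recover_J : Jof (achOf n I J) = J := by
  ext x
  constructor
  · intro hx
    obtain ⟨p, hp, rfl⟩ := Finset.mem_image.mp hx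
    exact (mem_finA.mp hp).2.1
  · intro hx
    have hxn : x < n := hb.2.1 x hx
    have hr : rk J x < I.card := by
      rw [hb.2.2.1]; exact rk_lt_card J hx
    obtain ⟨i, hi, hir⟩ := rk_surj I hr
    have hin : i < n := hb.1 i hi
    have hmem : ((⟨i, hin⟩ : Fin n), (⟨x, hxn⟩ : Fin n)) ∈ achOf n I J := ⟨hi, hx, by rw [hir]⟩
    exact Finset.mem_image.mpr ⟨_, mem_finA.mpr hmem, rfl⟩

end Ballot

/-- The equivalence between non-nesting partitions and ballot pairs. -/
noncomputable def antichainEquivBallot (n : ℕ) :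
    {A : Set (Fin n × Fin n) //
      (∀ p ∈ A, p.1 < p.2) ∧
      ∀ p ∈ A, ∀ q ∈ A, p ≠ q → ¬(q.1 ≤ p.1 ∧ p.2 ≤ q.2)} ≃
      {IJ : Finset ℕ × Finset ℕ // BallotCond n IJ.1 IJ.2} where
  toFun S := ⟨(Iof S.1, Jof S.1), ach_ballot S.2.1 S.2.2⟩
  invFun IJ := ⟨achOf n IJ.1.1 IJ.1.2, ballot_lt IJ.2, ballot_antichain IJ.2⟩
  left_inv S := by
    apply Subtype.ext
    exact ach_recover S.2.1 S.2.2
  right_inv IJ := by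
    apply Subtype.ext
    show (Iof (achOf n IJ.1.1 IJ.1.2), Jof (achOf n IJ.1.1 IJ.1.2)) = IJ.1
    rw [ballot_recover_I IJ.2, ballot_recover_J IJ.2]

end NonNestingAux

open NonNestingAux in
/-- The number of antichains in the poset of proper intervals
`{[i,j] : i < j}` of a linear order on `n` elements, ordered by containment
(`[i,j] ≤ [k,l]` iff `k ≤ i` and `j ≤ l`), is the `n`-th Catalan number. -/
theorem card_nonnesting_partitions_eq_catalan (n : ℕ) :
    Nat.card {A : Set (Fin n × Fin n) //
      (∀ p ∈ A, p.1 < p.2) ∧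
      ∀ p ∈ A, ∀ q ∈ A, p ≠ q → ¬ (q.1 ≤ p.1 ∧ p.2 ≤ q.2)} = catalan n := by
  rw [Nat.card_congr ((antichainEquivBallot n).trans (ballotEquivDyck n)),
    Nat.card_eq_fintype_card, DyckWord.card_dyckWord_semilength_eq_catalan]
end
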